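/- arXiv:1910.06937 — 2 statements merged into one kernel-verified Lean document; each statement's English description precedes it below -/
import Mathlib

section
/- Suppose the set of saddle points of the Lagrangian L is nonempty and the infinite sequences generated by the inexact augmented Lagrangian method are well-defined. Then the dual sequence {p^k} = {(lambda^k, mu^k)} and the auxiliary sequence {w^k} are bounded. -/
open scoped RealInnerProductSpace
open Filter

noncomputable section

/-- `Evec m` is `ℝ^m` with the Euclidean norm. -/
abbrev Evec (m : ℕ) := EuclideanSpace ℝ (Fin m)

/-- View a plain function `Fin m → ℝ` as a Euclidean vector. -/
def toE {m : ℕ} (v : Fin m → ℝ) : Evec m := WithLp.toLp 2 v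

/-- The dual space `ℝ^{m1} × ℝ^{m2}` with the Euclidean (ℓ²) product norm. -/
abbrev DualPair (m1 m2 : ℕ) := WithLp 2 (Evec m1 × Evec m2)

def mkDual {m1 m2 : ℕ} (lam : Evec m1) (mu : Evec m2) : DualPair m1 m2 := WithLp.toLp 2 (lam, mu)

/-- The primal-dual space `X × ℝ^{m1+m2}` with the Euclidean (ℓ²) product norm. -/
abbrev Triple (X : Type*) [NormedAddCommGroup X] (m1 m2 : ℕ) :=
  WithLp 2 (X × DualPair m1 m2)

def asT {X : Type*} [NormedAddCommGroup X] {m1 m2 : ℕ}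
    (q : X × DualPair m1 m2) : Triple X m1 m2 := WithLp.toLp 2 q

variable {X : Type*} [NormedAddCommGroup X] [InnerProductSpace ℝ X] [FiniteDimensional ℝ X]
variable {m1 m2 : ℕ}

/-- The Lagrangian `L(x, λ, μ) = f(x) + ⟨λ, h(x)⟩ + ⟨μ, g(x)⟩`. -/
def Lag (f : X → ℝ) (h : X → Evec m1) (g : X → Evec m2)
    (x : X) (lam : Evec m1) (mu : Evec m2) : ℝ :=
  f x + ⟪lam, h x⟫ + ⟪mu, g x⟫

/-- `(y, u, v) ∈ ∂L(x, λ, μ)`: the saddle subdifferential of the Lagrangian (for `μ ≥ 0`). -/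
def saddleSubdiff (f : X → ℝ) (h : X → Evec m1) (g : X → Evec m2)
    (x : X) (lam : Evec m1) (mu : Evec m2) (y : X) (u : Evec m1) (v : Evec m2) : Prop :=
  (∀ x' : X, Lag f h g x lam mu + ⟪y, x' - x⟫ ≤ Lag f h g x' lam mu) ∧
  (∀ (lam' : Evec m1) (mu' : Evec m2), (∀ i, 0 ≤ mu' i) →
    Lag f h g x lam' mu' ≤ Lag f h g x lam mu - ⟪u, lam' - lam⟫ - ⟪v, mu' - mu⟫)

/-- The set of saddle points of the Lagrangian: points `(x, (λ, μ))` with `μ ≥ 0`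
and `(0,0,0) ∈ ∂L(x, λ, μ)`. -/
def SaddlePoints (f : X → ℝ) (h : X → Evec m1) (g : X → Evec m2) :
    Set (X × DualPair m1 m2) :=
  {s | ∃ (x : X) (lam : Evec m1) (mu : Evec m2), s = (x, mkDual lam mu) ∧
    (∀ i, 0 ≤ mu i) ∧ saddleSubdiff f h g x lam mu 0 0 0}

/-- `X*`: the solution set of the primal problem (P). -/
def PrimalOpt (f : X → ℝ) (h : X → Evec m1) (g : X → Evec m2) : Set X :=
  {x | h x = 0 ∧ (∀ i, g x i ≤ 0) ∧
    ∀ x' : X, h x' = 0 → (∀ i, g x' i ≤ 0) → f x ≤ f x'}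

/-- The dual objective function `d(λ, μ) = inf_x L(x, λ, μ)`, valued in `EReal`. -/
def dualFun (f : X → ℝ) (h : X → Evec m1) (g : X → Evec m2)
    (lam : Evec m1) (mu : Evec m2) : EReal :=
  ⨅ x : X, ((Lag f h g x lam mu : ℝ) : EReal)

/-- `P*`: the solution set of the dual problem (D). -/
def DualOpt (f : X → ℝ) (h : X → Evec m1) (g : X → Evec m2) : Set (DualPair m1 m2) :=
  {p | ∃ (lam : Evec m1) (mu : Evec m2), p = mkDual lam mu ∧ (∀ i, 0 ≤ mu i) ∧
    ∀ (lam' : Evec m1) (mu' : Evec m2), (∀ i, 0 ≤ mu' i) →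
      dualFun f h g lam' mu' ≤ dualFun f h g lam mu}

/-- The augmented Lagrangian with penalty parameter `c`. -/
def AugLag (f : X → ℝ) (h : X → Evec m1) (g : X → Evec m2) (c : ℝ)
    (x : X) (lam : Evec m1) (mu : Evec m2) : ℝ :=
  f x + ⟪lam, h x⟫ + (c / 2) * ‖h x‖ ^ 2 +
    (1 / (2 * c)) * (‖toE (fun i => max 0 (mu i + c * g x i))‖ ^ 2 - ‖mu‖ ^ 2)

/-- The inexact augmented Lagrangian method of Eckstein and Silva, with relative error
tolerance `σ ∈ [0,1)` and penalty parameters `c k` with `inf_k c k > 0`. -/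
structure ALMSeq (f : X → ℝ) (h : X → Evec m1) (g : X → Evec m2)
    (σ : ℝ) (c : ℕ → ℝ) (x y w : ℕ → X)
    (lam : ℕ → Evec m1) (mu : ℕ → Evec m2) : Prop where
  sigma_nonneg : 0 ≤ σ
  sigma_lt_one : σ < 1
  c_pos : ∀ k, 0 < c k
  c_inf : ∃ cmin > 0, ∀ k, cmin ≤ c k
  mu0_nonneg : ∀ i, 0 ≤ mu 0 i
  /-- `y k` is a subgradient at `x k` of `x ↦ L_{c_k}(x, λ^{k-1}, μ^{k-1})`. -/
  subgrad : ∀ k, 1 ≤ k → ∀ x' : X,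
    AugLag f h g (c k) (x k) (lam (k - 1)) (mu (k - 1)) + ⟪y k, x' - x k⟫ ≤
      AugLag f h g (c k) x' (lam (k - 1)) (mu (k - 1))
  /-- The relative error criterion. -/
  err : ∀ k, 1 ≤ k →
    (2 / c k) * |⟪w (k - 1) - x k, y k⟫| + ‖y k‖ ^ 2 ≤
      σ * (‖h (x k)‖ ^ 2 +
        ‖toE (fun i => min (mu (k - 1) i / c k) (-(g (x k) i)))‖ ^ 2)
  lam_update : ∀ k, 1 ≤ k → lam k = lam (k - 1) + c k • h (x k)
  mu_update : ∀ k, 1 ≤ k → mu k = toE (fun i => max 0 (mu (k - 1) i + c k * g (x k) i))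
  w_update : ∀ k, 1 ≤ k → w k = w (k - 1) - c k • y k


section EAux

lemma einner {m : ℕ} (a b : Evec m) : ⟪a, b⟫ = ∑ i, a i * b i := by
  rw [PiLp.inner_apply]; simp [RCLike.inner_apply, mul_comm]

lemma enormsq {m : ℕ} (a : Evec m) : ‖a‖^2 = ∑ i, a i ^ 2 := by
  rw [← real_inner_self_eq_norm_sq, PiLp.inner_apply]; simp [RCLike.inner_apply, sq]

lemma prodnorm {m1 m2 : ℕ} (a : WithLp 2 (Evec m1 × Evec m2)) :
    ‖a‖^2 = ‖a.ofLp.1‖^2 + ‖a.ofLp.2‖^2 := by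
  rw [← real_inner_self_eq_norm_sq, WithLp.prod_inner_apply,
    real_inner_self_eq_norm_sq, real_inner_self_eq_norm_sq]

lemma scalarU (s t : ℝ) : max 0 s ^ 2 ≤ max 0 t ^ 2 + 2 * max 0 t * (s - t) + (s - t)^2 := by
  rcases le_total s 0 with hs | hs <;> rcases le_total t 0 with ht | ht
  · rw [max_eq_left hs, max_eq_left ht]; nlinarith
  · rw [max_eq_left hs, max_eq_right ht]; nlinarith
  · rw [max_eq_right hs, max_eq_left ht]; nlinarith
  · rw [max_eq_right hs, max_eq_right ht]; nlinarith

lemma scalarC2 {c : ℝ} (hc : 0 < c) (a gg t : ℝ) (ht : 0 ≤ t) :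
    c * (gg * (t - max 0 (a + c * gg))) ≤ (max 0 (a + c * gg) - a) * (t - max 0 (a + c * gg)) := by
  rcases le_total (a + c * gg) 0 with h1 | h1
  · rw [max_eq_left h1]; nlinarith
  · rw [max_eq_right h1]; nlinarith

lemma scalarMin {c : ℝ} (hc : 0 < c) (a gg : ℝ) :
    min (a / c) (-gg) = (a - max 0 (a + c * gg)) / c := by
  rcases le_total (a + c * gg) 0 with h1 | h1
  · rw [max_eq_left h1, min_eq_left]
    · ring_nf
    · rw [div_le_iff₀ hc]; nlinarith
  · rw [max_eq_right h1, min_eq_right]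
    · field_simp; ring
    · rw [le_div_iff₀ hc]; nlinarith

lemma convexOn_finsum {ι : Type*} (s : Finset ι) (F : ι → X → ℝ)
    (hF : ∀ i ∈ s, ConvexOn ℝ Set.univ (F i)) :
    ConvexOn ℝ Set.univ (fun z => ∑ i ∈ s, F i z) := by
  classical
  induction s using Finset.induction_on with
  | empty => simpa using convexOn_const (0:ℝ) convex_univ
  | @insert a s ha ih =>
    simp only [Finset.sum_insert ha]
    exact (hF a (Finset.mem_insert_self a s)).add
      (ih fun i hi => hF i (Finset.mem_insert_of_mem hi))

lemma localToGlobal {φ : X → ℝ} (hφ : ConvexOn ℝ Set.univ φ) {x0 y : X}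
    (hloc : ∀ ε : ℝ, 0 < ε → ∃ δ : ℝ, 0 < δ ∧ ∀ x' : X, ‖x' - x0‖ ≤ δ →
      φ x0 + ⟪y, x' - x0⟫ - ε * ‖x' - x0‖ ≤ φ x') :
    ∀ x' : X, φ x0 + ⟪y, x' - x0⟫ ≤ φ x' := by
  intro x'
  rcases eq_or_ne x' x0 with rfl | hne
  · simp
  have hpos : 0 < ‖x' - x0‖ := by rw [norm_pos_iff, sub_ne_zero]; exact hne
  refine le_of_forall_pos_le_add fun ε hε => ?_
  obtain ⟨δ, hδ, hd⟩ := hloc (ε / ‖x' - x0‖) (by positivity)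
  set t : ℝ := min 1 (δ / ‖x' - x0‖) with ht
  have ht0 : 0 < t := lt_min one_pos (by positivity)
  have ht1 : t ≤ 1 := min_le_left _ _
  set xt : X := x0 + t • (x' - x0) with hxt
  have hxtsub : xt - x0 = t • (x' - x0) := by rw [hxt]; abel
  have hnormxt : ‖xt - x0‖ = t * ‖x' - x0‖ := by
    rw [hxtsub, norm_smul, Real.norm_eq_abs, abs_of_pos ht0]
  have hxtd : ‖xt - x0‖ ≤ δ := by
    rw [hnormxt]
    calc t * ‖x' - x0‖ ≤ (δ / ‖x' - x0‖) * ‖x' - x0‖ :=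
          mul_le_mul_of_nonneg_right (min_le_right _ _) (norm_nonneg _)
      _ = δ := by field_simp
  have hpt : (1 - t) • x0 + t • x' = xt := by
    rw [hxt, sub_smul, one_smul, smul_sub]; abel
  have hcvx : φ xt ≤ (1 - t) * φ x0 + t * φ x' := by
    have := hφ.2 (Set.mem_univ x0) (Set.mem_univ x')
      (by linarith : (0:ℝ) ≤ 1 - t) ht0.le (by ring)
    rw [hpt] at this
    simpa [smul_eq_mul] using this
  have hinner : ⟪y, xt - x0⟫ = t * ⟪y, x' - x0⟫ := by
    rw [hxtsub, real_inner_smul_right]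
  have hl := hd xt hxtd
  rw [hinner, hnormxt] at hl
  have he : (ε / ‖x' - x0‖) * (t * ‖x' - x0‖) = t * ε := by field_simp
  rw [he] at hl
  have h1 : t * (φ x0 + ⟪y, x' - x0⟫) ≤ t * (φ x' + ε) := by nlinarith [hl, hcvx]
  exact le_of_mul_le_mul_left h1 ht0


lemma claim2 {f : X → ℝ} {h : X → Evec m1} {g : X → Evec m2}
    {c : ℝ} (hc : 0 < c) (lam0 : Evec m1) (mu0 : Evec m2) (x0 : X)
    (lam' : Evec m1) (mu' : Evec m2) (hmu' : ∀ i, 0 ≤ mu' i) :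
    Lag f h g x0 lam' mu' ≤
      Lag f h g x0 (lam0 + c • h x0) (toE fun i => max 0 (mu0 i + c * g x0 i))
        + ⟪h x0, lam' - (lam0 + c • h x0)⟫
        + (1/c) * ⟪(toE fun i => max 0 (mu0 i + c * g x0 i)) - mu0,
            mu' - (toE fun i => max 0 (mu0 i + c * g x0 i))⟫ := by
  set lhat := lam0 + c • h x0 with hlhat
  set muhat : Evec m2 := toE (fun i => max 0 (mu0 i + c * g x0 i)) with hmuhat
  have e1 : ⟪h x0, lam' - lhat⟫ = ⟪lam', h x0⟫ - ⟪lhat, h x0⟫ := by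
    rw [inner_sub_right, real_inner_comm (h x0) lam', real_inner_comm (h x0) lhat]
  have e2 : c * (⟪mu', g x0⟫ - ⟪muhat, g x0⟫) ≤ ⟪muhat - mu0, mu' - muhat⟫ := by
    rw [einner, einner, einner, ← Finset.sum_sub_distrib, Finset.mul_sum]
    refine Finset.sum_le_sum fun i _ => ?_
    have hsc := scalarC2 hc (mu0 i) (g x0 i) (mu' i) (hmu' i)
    have eh1 : muhat i = max 0 (mu0 i + c * g x0 i) := by simp [muhat, toE]
    have eh2 : (muhat - mu0) i = muhat i - mu0 i := rfl
    have eh3 : (mu' - muhat) i = mu' i - muhat i := rfl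
    rw [eh2, eh3, eh1]
    nlinarith [hsc]
  have e3 : ⟪mu', g x0⟫ - ⟪muhat, g x0⟫ ≤ (1/c) * ⟪muhat - mu0, mu' - muhat⟫ := by
    rw [show (1/c) * ⟪muhat - mu0, mu' - muhat⟫ = ⟪muhat - mu0, mu' - muhat⟫ / c from by ring,
      le_div_iff₀ hc]
    nlinarith [e2]
  simp only [Lag]
  linarith [e1, e3]

lemma claim1 {f : X → ℝ} {h : X → Evec m1} {g : X → Evec m2}
    (hf : ConvexOn ℝ Set.univ f)
    (hh : ∃ A : X →ᵃ[ℝ] Evec m1, ∀ z, h z = A z)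
    (hg1 : ∀ i, ConvexOn ℝ Set.univ (fun z => g z i))
    (hg2 : ∀ i, ContDiff ℝ 1 (fun z => g z i))
    {c : ℝ} (hc : 0 < c) (lam0 : Evec m1) (mu0 : Evec m2) (x0 y0 : X)
    (hsub : ∀ x' : X, AugLag f h g c x0 lam0 mu0 + ⟪y0, x' - x0⟫ ≤ AugLag f h g c x' lam0 mu0) :
    ∀ x' : X,
      Lag f h g x0 (lam0 + c • h x0) (toE fun i => max 0 (mu0 i + c * g x0 i)) + ⟪y0, x' - x0⟫ ≤
        Lag f h g x' (lam0 + c • h x0) (toE fun i => max 0 (mu0 i + c * g x0 i)) := by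
  have h2c : (0:ℝ) < 2 * c := by linarith
  set lhat := lam0 + c • h x0 with hlhat
  set muhat : Evec m2 := toE (fun i => max 0 (mu0 i + c * g x0 i)) with hmuhat
  have hmuhatnn : ∀ i, 0 ≤ muhat i := fun i => le_max_left (0:ℝ) _
  obtain ⟨A, hA⟩ := hh
  -- convexity of φ
  have hconv : ConvexOn ℝ Set.univ fun z => Lag f h g z lhat muhat := by
    have c1 : ConvexOn ℝ Set.univ fun z => ⟪lhat, h z⟫ := by
      refine ⟨convex_univ, fun u _ v _ a b ha hb hab => ?_⟩
      have hcomb : h (a • u + b • v) = a • h u + b • h v := by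
        rw [hA, hA, hA, Convex.combo_affine_apply hab]
      show ⟪lhat, h (a • u + b • v)⟫ ≤ a • ⟪lhat, h u⟫ + b • ⟪lhat, h v⟫
      rw [hcomb, inner_add_right, real_inner_smul_right, real_inner_smul_right]
      simp [smul_eq_mul]
    have c2 : ConvexOn ℝ Set.univ fun z => ⟪muhat, g z⟫ := by
      have e : (fun z => ⟪muhat, g z⟫) = fun z => ∑ i, muhat i * g z i := by
        funext z; rw [einner]
      rw [e]
      refine convexOn_finsum Finset.univ _ fun i _ => ?_
      simpa [smul_eq_mul] using (hg1 i).smul (hmuhatnn i)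
    have heq : (fun z => Lag f h g z lhat muhat)
        = ((f + fun z => ⟪lhat, h z⟫) + fun z => ⟪muhat, g z⟫) := by
      funext z; simp [Lag]
    rw [heq]
    exact (hf.add c1).add c2
  -- KEY inequality
  have hK : ∀ x' : X, AugLag f h g c x' lam0 mu0 - Lag f h g x' lhat muhat ≤
      AugLag f h g c x0 lam0 mu0 - Lag f h g x0 lhat muhat
        + (c/2) * (‖h x' - h x0‖^2 + ‖g x' - g x0‖^2) := by
    intro x'
    have eH : ⟪lhat, h x'⟫ = ⟪lam0, h x'⟫ + c * ⟪h x0, h x'⟫ := by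
      rw [hlhat, inner_add_left, real_inner_smul_left]
    have eH0 : ⟪lhat, h x0⟫ = ⟪lam0, h x0⟫ + c * ‖h x0‖^2 := by
      rw [hlhat, inner_add_left, real_inner_smul_left, real_inner_self_eq_norm_sq]
    have eN' : c/2 * ‖h x' - h x0‖^2
        = c/2 * ‖h x'‖^2 - c * ⟪h x', h x0⟫ + c/2 * ‖h x0‖^2 := by
      rw [norm_sub_sq_real]; ring
    have eC' : c * ⟪h x0, h x'⟫ = c * ⟪h x', h x0⟫ := by rw [real_inner_comm]
    have eG : ‖toE (fun i => max 0 (mu0 i + c * g x' i))‖^2 - ‖muhat‖^2 ≤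
        2*c*⟪muhat, g x' - g x0⟫ + c^2 * ‖g x' - g x0‖^2 := by
      rw [enormsq, enormsq, einner, enormsq, ← Finset.sum_sub_distrib, Finset.mul_sum,
        Finset.mul_sum, ← Finset.sum_add_distrib]
      refine Finset.sum_le_sum fun i _ => ?_
      have hu := scalarU (mu0 i + c * g x' i) (mu0 i + c * g x0 i)
      have e1 : toE (fun i => max 0 (mu0 i + c * g x' i)) i = max 0 (mu0 i + c * g x' i) := rfl
      have e2 : muhat i = max 0 (mu0 i + c * g x0 i) := rfl
      have e3 : (g x' - g x0) i = g x' i - g x0 i := rfl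
      rw [e1, e2, e3]
      nlinarith [hu]
    have eG' : 1/(2*c) * ‖toE (fun i => max 0 (mu0 i + c * g x' i))‖^2
        - 1/(2*c) * ‖muhat‖^2 ≤ ⟪muhat, g x' - g x0⟫ + c/2 * ‖g x' - g x0‖^2 := by
      rw [show (1/(2*c) * ‖toE (fun i => max 0 (mu0 i + c * g x' i))‖^2
          - 1/(2*c) * ‖muhat‖^2 : ℝ)
          = (‖toE (fun i => max 0 (mu0 i + c * g x' i))‖^2 - ‖muhat‖^2)/(2*c) from by ring,
        div_le_iff₀ h2c]
      nlinarith [eG]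
    have eR : ⟪muhat, g x' - g x0⟫ = ⟪muhat, g x'⟫ - ⟪muhat, g x0⟫ := inner_sub_right _ _ _
    have eA0 : ‖toE (fun i => max 0 (mu0 i + c * g x0 i))‖ = ‖muhat‖ := by rw [hmuhat]
    simp only [AugLag, Lag]
    rw [eA0]
    linarith [eG', eH, eH0, eN', eC', eR]
  -- Lipschitz data
  have hgc : ContDiff ℝ 1 g :=
    (PiLp.continuousLinearEquiv 2 ℝ (fun _ : Fin m2 => ℝ)).symm.contDiff.comp
      (contDiff_pi.mpr hg2)
  obtain ⟨Kg, t, ht, hlip⟩ := (hgc.contDiffAt (x := x0)).exists_lipschitzOnWith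
  obtain ⟨δ₁, hδ₁, hball⟩ := Metric.mem_nhds_iff.mp ht
  obtain ⟨Kh, hKh0, hhl⟩ : ∃ Kh : ℝ, 0 ≤ Kh ∧ ∀ z1 z2 : X, ‖h z1 - h z2‖ ≤ Kh * ‖z1 - z2‖ := by
    refine ⟨‖LinearMap.toContinuousLinearMap A.linear‖, norm_nonneg _, fun z1 z2 => ?_⟩
    have e : h z1 - h z2 = LinearMap.toContinuousLinearMap A.linear (z1 - z2) := by
      rw [hA, hA]
      have e2 := A.linearMap_vsub z1 z2
      simp only [vsub_eq_sub] at e2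
      rw [← e2]; rfl
    rw [e]; exact (LinearMap.toContinuousLinearMap A.linear).le_opNorm _
  -- local inequality
  have hloc : ∀ ε : ℝ, 0 < ε → ∃ δ : ℝ, 0 < δ ∧ ∀ x' : X, ‖x' - x0‖ ≤ δ →
      Lag f h g x0 lhat muhat + ⟪y0, x' - x0⟫ - ε * ‖x' - x0‖ ≤ Lag f h g x' lhat muhat := by
    intro ε hε
    set C : ℝ := (c/2) * (Kh^2 + (Kg:ℝ)^2) + 1 with hC
    have hC0 : 0 < C := by positivity
    refine ⟨min (δ₁/2) (ε / C), by positivity, fun x' hx' => ?_⟩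
    have hx1 : ‖x' - x0‖ ≤ δ₁/2 := le_trans hx' (min_le_left _ _)
    have hx2 : ‖x' - x0‖ ≤ ε / C := le_trans hx' (min_le_right _ _)
    have hx'mem : x' ∈ t := hball (by rw [Metric.mem_ball, dist_eq_norm]; linarith)
    have hx0mem : x0 ∈ t := hball (Metric.mem_ball_self hδ₁)
    have hgl : ‖g x' - g x0‖ ≤ (Kg:ℝ) * ‖x' - x0‖ := by
      have := hlip.dist_le_mul x' hx'mem x0 hx0mem
      rwa [dist_eq_norm, dist_eq_norm] at this
    have hhb : ‖h x' - h x0‖^2 ≤ Kh^2 * ‖x' - x0‖^2 := by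
      have := pow_le_pow_left₀ (norm_nonneg (h x' - h x0)) (hhl x' x0) 2
      rwa [mul_pow] at this
    have hgb : ‖g x' - g x0‖^2 ≤ (Kg:ℝ)^2 * ‖x' - x0‖^2 := by
      have := pow_le_pow_left₀ (norm_nonneg (g x' - g x0)) hgl 2
      rwa [mul_pow] at this
    have h3 : C * ‖x' - x0‖ ≤ ε := by
      have := (le_div_iff₀ hC0).mp hx2
      linarith
    have hslack : (c/2) * (‖h x' - h x0‖^2 + ‖g x' - g x0‖^2) ≤ ε * ‖x' - x0‖ := by
      calc (c/2) * (‖h x' - h x0‖^2 + ‖g x' - g x0‖^2)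
          ≤ (c/2) * ((Kh^2 + (Kg:ℝ)^2) * ‖x' - x0‖^2) := by
            apply mul_le_mul_of_nonneg_left _ (by linarith : (0:ℝ) ≤ c/2)
            linarith [hhb, hgb]
        _ = ((c/2) * (Kh^2 + (Kg:ℝ)^2) * ‖x' - x0‖) * ‖x' - x0‖ := by ring
        _ ≤ (C * ‖x' - x0‖) * ‖x' - x0‖ := by
            apply mul_le_mul_of_nonneg_right _ (norm_nonneg _)
            apply mul_le_mul_of_nonneg_right _ (norm_nonneg _)
            rw [hC]; linarith
        _ ≤ ε * ‖x' - x0‖ :=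
            mul_le_mul_of_nonneg_right h3 (norm_nonneg _)
    have hs := hsub x'
    have hk := hK x'
    linarith [hs, hk, hslack]
  exact localToGlobal hconv hloc

end EAux

theorem eckstein_silva_alm_dual_and_aux_sequences_bounded {f : X → ℝ} {h : X → Evec m1} {g : X → Evec m2}
    (hf : ConvexOn ℝ Set.univ f)
    (hh : ∃ A : X →ᵃ[ℝ] Evec m1, ∀ z, h z = A z)
    (hg1 : ∀ i, ConvexOn ℝ Set.univ (fun z => g z i))
    (hg2 : ∀ i, ContDiff ℝ 1 (fun z => g z i))
    {σ : ℝ} {c : ℕ → ℝ} {x y w : ℕ → X} {lam : ℕ → Evec m1} {mu : ℕ → Evec m2}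
    (halg : ALMSeq f h g σ c x y w lam mu)
    (hsad : (SaddlePoints f h g).Nonempty)
 :
    ∃ M : ℝ, (∀ k, ‖mkDual (lam k) (mu k)‖ ≤ M) ∧ (∀ k, ‖w k‖ ≤ M) := by
  obtain ⟨s, xb, lb, mb, hseq, hmb, hsdA, hsdB⟩ := hsad
  clear hseq
  have hmu : ∀ k (i : Fin m2), 0 ≤ mu k i := by
    intro k
    cases k with
    | zero => exact halg.mu0_nonneg
    | succ n =>
      intro i
      rw [halg.mu_update (n+1) (by omega)]
      exact le_max_left (0:ℝ) _
  set Aseq : ℕ → ℝ := fun k => ‖w k - xb‖^2 + ‖lam k - lb‖^2 + ‖mu k - mb‖^2 with hAseq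
  have hstep : ∀ k : ℕ, Aseq (k+1) ≤ Aseq k := by
    intro k
    have hc : 0 < c (k+1) := halg.c_pos (k+1)
    have hk1 : (1:ℕ) ≤ k+1 := by omega
    have hsub := halg.subgrad (k+1) hk1
    have herr := halg.err (k+1) hk1
    have hlam2 := halg.lam_update (k+1) hk1
    have hmuu := halg.mu_update (k+1) hk1
    have hw := halg.w_update (k+1) hk1
    simp only [Nat.add_sub_cancel] at hsub herr hlam2 hmuu hw
    set cc := c (k+1) with hcc
    have hcc0 : cc ≠ 0 := ne_of_gt hc
    set umu : Evec m2 := toE (fun i => min (mu k i / cc) (-(g (x (k+1)) i))) with humu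
    have hmu2 : mu (k+1) = mu k - cc • umu := by
      rw [hmuu]; ext i
      have e1 : umu i = (mu k i - max 0 (mu k i + cc * g (x (k+1)) i)) / cc :=
        by rw [← scalarMin hc]; rfl
      have e2 : (mu k - cc • umu) i = mu k i - cc * umu i := rfl
      rw [e2, e1]
      show max 0 (mu k i + cc * g (x (k+1)) i)
        = mu k i - cc * ((mu k i - max 0 (mu k i + cc * g (x (k+1)) i)) / cc)
      field_simp; ring
    have hC1 := claim1 hf hh hg1 hg2 hc (lam k) (mu k) (x (k+1)) (y (k+1)) hsub
    rw [← hlam2, ← hmuu] at hC1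
    have hC2 := claim2 (f := f) (h := h) (g := g) hc (lam k) (mu k) (x (k+1)) lb mb hmb
    rw [← hlam2, ← hmuu] at hC2
    have hs1 := hC1 xb
    have hs2 := hsdB (lam (k+1)) (mu (k+1)) (hmu (k+1))
    have hs3 := hsdA (x (k+1))
    simp only [inner_zero_left, add_zero, sub_zero] at hs2 hs3
    have ea : ⟪y (k+1), xb - x (k+1)⟫ = -⟪y (k+1), x (k+1) - xb⟫ := by
      rw [show xb - x (k+1) = -(x (k+1) - xb) from by abel, inner_neg_right]
    have ep : ⟪h (x (k+1)), lb - lam (k+1)⟫ = -⟪h (x (k+1)), lam (k+1) - lb⟫ := by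
      rw [show lb - lam (k+1) = -(lam (k+1) - lb) from by abel, inner_neg_right]
    have eq1 : ⟪mu (k+1) - mu k, mb - mu (k+1)⟫ = cc * ⟪umu, mu (k+1) - mb⟫ := by
      rw [show mu (k+1) - mu k = -(cc • umu) from by rw [hmu2]; abel,
        show mb - mu (k+1) = -(mu (k+1) - mb) from by abel,
        inner_neg_left, inner_neg_right, real_inner_smul_left]
      ring
    have eq1' : (1/cc) * ⟪mu (k+1) - mu k, mb - mu (k+1)⟫ = ⟪umu, mu (k+1) - mb⟫ := by
      rw [eq1]; field_simp
    have hS : ⟪h (x (k+1)), lam (k+1) - lb⟫ - ⟪umu, mu (k+1) - mb⟫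
        ≤ ⟪y (k+1), x (k+1) - xb⟫ := by
      linarith [hs1, hs2, hs3, hC2, ea, ep, eq1']
    have F1 : ‖w (k+1) - xb‖^2 = ‖w k - xb‖^2
        - 2*cc*(⟪y (k+1), x (k+1) - xb⟫ + ⟪y (k+1), w k - x (k+1)⟫) + cc^2*‖y (k+1)‖^2 := by
      rw [hw, show w k - cc • y (k+1) - xb = (w k - xb) - cc • y (k+1) from by abel,
        norm_sub_sq_real, real_inner_smul_right, norm_smul]
      rw [show ⟪w k - xb, y (k+1)⟫ = ⟪y (k+1), x (k+1) - xb⟫ + ⟪y (k+1), w k - x (k+1)⟫ from by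
        rw [real_inner_comm, show w k - xb = (x (k+1) - xb) + (w k - x (k+1)) from by abel,
          inner_add_right]]
      rw [Real.norm_eq_abs, mul_pow, sq_abs]
      ring
    have F2 : ‖lam k - lb‖^2 = ‖lam (k+1) - lb‖^2
        - 2*cc*⟪h (x (k+1)), lam (k+1) - lb⟫ + cc^2*‖h (x (k+1))‖^2 := by
      rw [show lam k - lb = (lam (k+1) - lb) - cc • h (x (k+1)) from by rw [hlam2]; abel,
        norm_sub_sq_real, real_inner_smul_right, norm_smul, Real.norm_eq_abs, mul_pow, sq_abs,
        real_inner_comm (lam (k+1) - lb)]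
      ring
    have F3 : ‖mu k - mb‖^2 = ‖mu (k+1) - mb‖^2
        + 2*cc*⟪umu, mu (k+1) - mb⟫ + cc^2*‖umu‖^2 := by
      rw [show mu k - mb = (mu (k+1) - mb) + cc • umu from by rw [hmu2]; abel,
        norm_add_sq_real, real_inner_smul_right, norm_smul, Real.norm_eq_abs, mul_pow, sq_abs,
        real_inner_comm (mu (k+1) - mb)]
      ring
    have hbE : -⟪y (k+1), w k - x (k+1)⟫ ≤ |⟪w k - x (k+1), y (k+1)⟫| := by
      rw [real_inner_comm]; exact neg_le_abs _
    have F5 : 2*cc*|⟪w k - x (k+1), y (k+1)⟫| + cc^2*‖y (k+1)‖^2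
        ≤ σ * cc^2 * (‖h (x (k+1))‖^2 + ‖umu‖^2) := by
      have h2 := mul_le_mul_of_nonneg_left herr (mul_pos hc hc).le
      have hid : cc*cc*((2/cc) * |⟪w k - x (k+1), y (k+1)⟫| + ‖y (k+1)‖^2)
          = 2*cc*|⟪w k - x (k+1), y (k+1)⟫| + cc^2*‖y (k+1)‖^2 := by
        field_simp
      rw [hid] at h2
      calc 2*cc*|⟪w k - x (k+1), y (k+1)⟫| + cc^2*‖y (k+1)‖^2
          ≤ cc*cc*(σ * (‖h (x (k+1))‖^2 + ‖umu‖^2)) := h2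
        _ = σ * cc^2 * (‖h (x (k+1))‖^2 + ‖umu‖^2) := by ring
    have hfin : σ * cc^2 * (‖h (x (k+1))‖^2 + ‖umu‖^2)
        ≤ cc^2 * (‖h (x (k+1))‖^2 + ‖umu‖^2) := by
      have hsum : (0:ℝ) ≤ ‖h (x (k+1))‖^2 + ‖umu‖^2 :=
        add_nonneg (sq_nonneg _) (sq_nonneg _)
      have h1 : σ * cc^2 ≤ 1 * cc^2 :=
        mul_le_mul_of_nonneg_right halg.sigma_lt_one.le (sq_nonneg cc)
      have h2 := mul_le_mul_of_nonneg_right h1 hsum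
      rw [one_mul] at h2
      exact h2
    have hSmul : 0 ≤ 2*cc*(⟪y (k+1), x (k+1) - xb⟫ - ⟪h (x (k+1)), lam (k+1) - lb⟫
        + ⟪umu, mu (k+1) - mb⟫) :=
      mul_nonneg (by linarith) (by linarith [hS])
    have hbE' : -(2*cc*⟪y (k+1), w k - x (k+1)⟫) ≤ 2*cc*|⟪w k - x (k+1), y (k+1)⟫| := by
      have := mul_le_mul_of_nonneg_left hbE (by linarith : (0:ℝ) ≤ 2*cc)
      linarith [this]
    show ‖w (k+1) - xb‖^2 + ‖lam (k+1) - lb‖^2 + ‖mu (k+1) - mb‖^2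
        ≤ ‖w k - xb‖^2 + ‖lam k - lb‖^2 + ‖mu k - mb‖^2
    linarith [F1, F2, F3, F5, hfin, hSmul, hbE']
  have hmono : ∀ k, Aseq k ≤ Aseq 0 := by
    intro k
    induction k with
    | zero => exact le_rfl
    | succ n ih => exact (hstep n).trans ih
  refine ⟨Real.sqrt (Aseq 0) + (‖mkDual lb mb‖ + ‖xb‖), fun k => ?_, fun k => ?_⟩
  · have h1 : ‖mkDual (lam k) (mu k) - mkDual lb mb‖^2 ≤ Aseq 0 := by
      have e : mkDual (lam k) (mu k) - mkDual lb mb = mkDual (lam k - lb) (mu k - mb) := by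
        rw [mkDual, mkDual, mkDual, ← WithLp.toLp_sub, Prod.mk_sub_mk]
      rw [e, prodnorm]
      have e1 : (mkDual (lam k - lb) (mu k - mb)).ofLp.1 = lam k - lb := rfl
      have e2 : (mkDual (lam k - lb) (mu k - mb)).ofLp.2 = mu k - mb := rfl
      rw [e1, e2]
      have hk := hmono k
      simp only [hAseq] at hk ⊢
      linarith [sq_nonneg ‖w k - xb‖, hk]
    have h2 : ‖mkDual (lam k) (mu k) - mkDual lb mb‖ ≤ Real.sqrt (Aseq 0) := by
      rw [← Real.sqrt_sq (norm_nonneg (mkDual (lam k) (mu k) - mkDual lb mb))]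
      exact Real.sqrt_le_sqrt h1
    have h3 : ‖mkDual (lam k) (mu k)‖
        ≤ ‖mkDual (lam k) (mu k) - mkDual lb mb‖ + ‖mkDual lb mb‖ := by
      simpa using norm_add_le (mkDual (lam k) (mu k) - mkDual lb mb) (mkDual lb mb)
    have h4 : (0:ℝ) ≤ ‖xb‖ := norm_nonneg xb
    linarith
  · have h1 : ‖w k - xb‖^2 ≤ Aseq 0 := by
      have hk := hmono k
      simp only [hAseq] at hk ⊢
      linarith [sq_nonneg ‖lam k - lb‖, sq_nonneg ‖mu k - mb‖, hk]
    have h2 : ‖w k - xb‖ ≤ Real.sqrt (Aseq 0) := by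
      rw [← Real.sqrt_sq (norm_nonneg (w k - xb))]
      exact Real.sqrt_le_sqrt h1
    have h3 : ‖w k‖ ≤ ‖w k - xb‖ + ‖xb‖ := by
      simpa using norm_add_le (w k - xb) xb
    have h4 : (0:ℝ) ≤ ‖mkDual lb mb‖ := norm_nonneg _
    linarith
end
end

section
/- Suppose the set of saddle points X* x P* is nonempty, the infinite sequences generated by the inexact augmented Lagrangian method are well-defined, and the error bound assumption holds with constants kappa > 0 and epsilon > 0. Then dist(x^k, X*) -> 0 as k -> infinity. -/
open scoped RealInnerProductSpace
open Filter Topology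

noncomputable section

variable {X : Type*} [NormedAddCommGroup X] [InnerProductSpace ℝ X] [FiniteDimensional ℝ X]
variable {m1 m2 : ℕ}

section ESAux

/-! ### Auxiliary lemmas for the convergence proof -/

/-- Core slope lemma: if `y` is a subgradient of `F + φ` at `x`, with `F` convex and `φ`
differentiable along the line `x + t • d` with derivative `Dd`, then
`F (x+d) ≥ F x + ⟪y, d⟫ - Dd`. -/
lemma ES_core {F φ : X → ℝ} (hF : ConvexOn ℝ Set.univ F) {x y d : X} {Dd : ℝ}
    (hφ : HasDerivAt (fun t : ℝ => φ (x + t • d)) Dd 0)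
    (hy : ∀ x', F x + φ x + ⟪y, x' - x⟫ ≤ F x' + φ x') :
    F x + ⟪y, d⟫ - Dd ≤ F (x + d) := by
  set G : ℝ → ℝ := fun t => φ (x + t • d) with hG
  have hGslope : Tendsto (fun t : ℝ => t⁻¹ • (G (0 + t) - G 0)) (𝓝[>] (0:ℝ)) (𝓝 Dd) :=
    hφ.tendsto_slope_zero_right
  set C : ℝ := F (x + d) - F x - ⟪y, d⟫ with hC
  have htend : Tendsto (fun t : ℝ => C + t⁻¹ • (G (0 + t) - G 0)) (𝓝[>] (0:ℝ))
      (𝓝 (C + Dd)) := tendsto_const_nhds.add hGslope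
  have hev : ∀ᶠ t in 𝓝[>] (0:ℝ), 0 ≤ C + t⁻¹ • (G (0 + t) - G 0) := by
    filter_upwards [Ioc_mem_nhdsGT_of_mem (Set.left_mem_Ico.2 zero_lt_one)] with t ht
    obtain ⟨ht0, ht1⟩ := ht
    have key := hy (x + t • d)
    have hinner : ⟪y, x + t • d - x⟫ = t * ⟪y, d⟫ := by
      rw [add_sub_cancel_left, real_inner_smul_right]
    rw [hinner] at key
    -- convexity of F
    have hcomb : (1 - t) • x + t • (x + d) = x + t • d := by
      rw [smul_add]; rw [sub_smul, one_smul]; abel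
    have hconv := hF.2 (Set.mem_univ x) (Set.mem_univ (x + d))
      (by linarith : (0:ℝ) ≤ 1 - t) (le_of_lt ht0) (by ring)
    rw [hcomb] at hconv
    have hG0 : G 0 = φ x := by simp [hG]
    have hGt : G (0 + t) = φ (x + t • d) := by simp [hG]
    rw [smul_eq_mul, hG0, hGt]
    have h5 : ⟪y, d⟫ - (F (x + d) - F x) ≤ (φ (x + t • d) - φ x) / t := by
      rw [le_div_iff₀ ht0]
      have : t * (F (x + d) - F x) + (φ (x + t • d) - φ x) ≥ t * ⟪y, d⟫ := by
        have h6 : F (x + t • d) - F x ≤ t * (F (x + d) - F x) := by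
          have : F (x + t • d) ≤ (1 - t) * F x + t * F (x + d) := hconv
          nlinarith
        linarith
      nlinarith
    rw [div_eq_inv_mul] at h5
    simp only [hC]
    linarith
  have := ge_of_tendsto htend hev
  simp only [hC] at this
  linarith

/-- Gradient inequality for a convex function along a line. -/
lemma ES_grad_ineq {ψ : X → ℝ} (hψ : ConvexOn ℝ Set.univ ψ) {x d : X} {Dd : ℝ}
    (hd : HasDerivAt (fun t : ℝ => ψ (x + t • d)) Dd 0) :
    ψ x + Dd ≤ ψ (x + d) := by
  have := ES_core (F := ψ) (φ := fun z => -ψ z) (y := 0) hψ (hd.neg)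
    (fun x' => by simp)
  simpa using this

/-- Transfer a subgradient of `f + φ` at `x` to a subgradient of `f + ψ` at `x`, when `φ` and
`ψ` have the same directional derivatives at `x` and `ψ` is convex. -/
lemma ES_transfer {f φ ψ : X → ℝ} (hf : ConvexOn ℝ Set.univ f)
    (hψ : ConvexOn ℝ Set.univ ψ) {x y : X}
    (hD : ∀ d : X, ∃ Dd : ℝ, HasDerivAt (fun t : ℝ => φ (x + t • d)) Dd 0 ∧
      HasDerivAt (fun t : ℝ => ψ (x + t • d)) Dd 0)
    (hy : ∀ x', f x + φ x + ⟪y, x' - x⟫ ≤ f x' + φ x') :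
    ∀ x', f x + ψ x + ⟪y, x' - x⟫ ≤ f x' + ψ x' := by
  intro x'
  obtain ⟨Dd, hφd, hψd⟩ := hD (x' - x)
  have h1 := ES_core hf hφd hy
  have h2 := ES_grad_ineq hψ hψd
  rw [add_sub_cancel] at h1 h2
  linarith

/-- Derivative of `s ↦ max 0 s ^ 2`. -/
lemma ES_qderiv (s0 : ℝ) : HasDerivAt (fun s : ℝ => max 0 s ^ 2) (2 * max 0 s0) s0 := by
  rcases lt_trichotomy s0 0 with hneg | hzero | hpos
  · have : HasDerivAt (fun _ : ℝ => (0:ℝ)) 0 s0 := hasDerivAt_const _ _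
    have heq : (fun s : ℝ => max 0 s ^ 2) =ᶠ[nhds s0] fun _ => (0:ℝ) := by
      filter_upwards [Iio_mem_nhds hneg] with s hs
      simp [max_eq_left (Set.mem_Iio.mp hs).le]
    have := this.congr_of_eventuallyEq heq
    simpa [max_eq_left (le_of_lt hneg)] using this
  · subst hzero
    rw [hasDerivAt_iff_isLittleO]
    have hlo : (fun s : ℝ => s * s) =o[𝓝 (0:ℝ)] fun s : ℝ => s := by
      have h1 : (fun s : ℝ => s) =o[𝓝 (0:ℝ)] fun _ : ℝ => (1:ℝ) :=
        (Asymptotics.isLittleO_one_iff ℝ).mpr (by exact tendsto_id)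
      have := h1.mul_isBigO (Asymptotics.isBigO_refl (fun s : ℝ => s) (𝓝 (0:ℝ)))
      simpa using this
    have hbig : (fun s : ℝ => max 0 s ^ 2 - max 0 (0:ℝ) ^ 2 - (s - 0) • (2 * max 0 (0:ℝ)))
        =O[𝓝 (0:ℝ)] fun s : ℝ => s * s := by
      apply Asymptotics.IsBigO.of_bound 1
      filter_upwards with s
      have habs : |max 0 s| ≤ |s| := by
        rcases le_total s 0 with hs | hs
        · simp [max_eq_left hs]
        · simp [max_eq_right hs, abs_of_nonneg hs]
      have : ‖max 0 s ^ 2 - max 0 (0:ℝ) ^ 2 - (s - 0) • (2 * max 0 (0:ℝ))‖ = |max 0 s| ^ 2 := by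
        simp [abs_pow, sq_abs]
      rw [this]
      calc |max 0 s| ^ 2 ≤ |s| ^ 2 := pow_le_pow_left₀ (abs_nonneg _) habs 2
        _ = 1 * ‖s * s‖ := by rw [one_mul, sq, norm_mul]; simp
    exact hbig.trans_isLittleO (by simpa using hlo)
  · have heq : (fun s : ℝ => max 0 s ^ 2) =ᶠ[nhds s0] fun s => s ^ 2 := by
      filter_upwards [Ioi_mem_nhds hpos] with s hs
      simp [max_eq_right (Set.mem_Ioi.mp hs).le]
    have := ((hasDerivAt_pow 2 s0)).congr_of_eventuallyEq heq
    simpa [max_eq_right (le_of_lt hpos), pow_one, mul_comm] using this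


lemma ES_inner {m : ℕ} (u v : Evec m) : ⟪u, v⟫ = ∑ i, u i * v i := by
  simp [PiLp.inner_apply, RCLike.inner_apply, mul_comm]

lemma ES_normsq {m : ℕ} (v : Evec m) : ‖v‖ ^ 2 = ∑ i, v i ^ 2 := by
  rw [← real_inner_self_eq_norm_sq, ES_inner]
  simp [sq]

lemma ES_min_eq {a b c : ℝ} (hc : 0 < c) :
    min (a / c) (-b) = (a - max 0 (a + c * b)) / c := by
  rcases le_total 0 (a + c * b) with hs | hs
  · rw [max_eq_right hs]
    have h1 : (a - (a + c * b)) / c = -b := by rw [div_eq_iff hc.ne']; ring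
    rw [h1]
    refine min_eq_right ?_
    rw [neg_le, ← neg_div, div_le_iff₀ hc]
    nlinarith
  · rw [max_eq_left hs, sub_zero]
    refine min_eq_left ?_
    rw [div_le_iff₀ hc]
    nlinarith

end ESAux

section ESMain

variable {X : Type*} [NormedAddCommGroup X] [InnerProductSpace ℝ X] [FiniteDimensional ℝ X]
variable {m1 m2 : ℕ}

/-- A saddle point yields a primal solution. -/
lemma ES_saddle_primal {f : X → ℝ} {h : X → Evec m1} {g : X → Evec m2}
    {xs : X} {lams : Evec m1} {mus : Evec m2} (hmu : ∀ i, 0 ≤ mus i)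
    (hs : saddleSubdiff f h g xs lams mus 0 0 0) : xs ∈ PrimalOpt f h g := by
  have hfeas1 : h xs = 0 := by
    have := hs.2 (lams + h xs) mus hmu
    simp only [Lag, inner_zero_left, sub_zero, inner_add_left] at this
    have h2 : ⟪h xs, h xs⟫ ≤ 0 := by linarith
    exact real_inner_self_nonpos.mp h2
  have hfeas2 : ∀ i, g xs i ≤ 0 := by
    intro i
    have := hs.2 lams (mus + toE (Pi.single i 1)) (fun j => by
      by_cases hji : j = i <;>
        simp [toE, PiLp.add_apply, Pi.single_apply, hji, hmu j, le_trans (hmu j)])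
    simp only [Lag, inner_zero_left, sub_zero, inner_add_left] at this
    have h2 : ⟪toE (Pi.single i 1), g xs⟫ ≤ 0 := by linarith
    rw [ES_inner] at h2
    simpa [toE, Pi.single_apply, Finset.sum_ite_eq'] using h2
  have hcomp : ⟪mus, g xs⟫ = 0 := by
    have h1 : ⟪mus, g xs⟫ ≤ 0 := by
      rw [ES_inner]
      exact Finset.sum_nonpos fun j _ => mul_nonpos_of_nonneg_of_nonpos (hmu j) (hfeas2 j)
    have h2 := hs.2 lams 0 (fun j => le_refl 0)
    simp only [Lag, inner_zero_left, sub_zero] at h2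
    linarith
  refine ⟨hfeas1, hfeas2, fun x' hx' hgx' => ?_⟩
  have h1 := hs.1 x'
  simp only [Lag, inner_zero_left, add_zero, hfeas1, inner_zero_right, hcomp] at h1
  have h2 : ⟪mus, g x'⟫ ≤ 0 := by
    rw [ES_inner]
    exact Finset.sum_nonpos fun j _ => mul_nonpos_of_nonneg_of_nonpos (hmu j) (hgx' j)
  rw [hx'] at h1
  simp only [inner_zero_right] at h1
  linarith

/-- Monotonicity of the saddle subdifferential. -/
lemma ES_mono {f : X → ℝ} {h : X → Evec m1} {g : X → Evec m2}
    {xk xs : X} {lamk lams : Evec m1} {muk mus : Evec m2} {yk : X}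
    {uk : Evec m1} {vk : Evec m2}
    (hmuk : ∀ i, 0 ≤ muk i) (hmus : ∀ i, 0 ≤ mus i)
    (h1 : saddleSubdiff f h g xk lamk muk yk uk vk)
    (h2 : saddleSubdiff f h g xs lams mus 0 0 0) :
    0 ≤ ⟪yk, xk - xs⟫ + ⟪uk, lamk - lams⟫ + ⟪vk, muk - mus⟫ := by
  have i1 := h1.1 xs
  have i2 := h1.2 lams mus hmus
  have i3 := h2.1 xk
  have i4 := h2.2 lamk muk hmuk
  simp only [inner_zero_left, sub_zero, add_zero] at i3 i4
  have e1 : ⟪yk, xs - xk⟫ = -⟪yk, xk - xs⟫ := by rw [← neg_sub, inner_neg_right]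
  have e2 : ⟪uk, lams - lamk⟫ = -⟪uk, lamk - lams⟫ := by rw [← neg_sub, inner_neg_right]
  have e3 : ⟪vk, mus - muk⟫ = -⟪vk, muk - mus⟫ := by rw [← neg_sub, inner_neg_right]
  rw [e1] at i1
  rw [e2, e3] at i2
  linarith


@[simp] lemma ES_toE {m : ℕ} (v : Fin m → ℝ) (i : Fin m) : toE v i = v i := rfl

lemma ES_psi_convex {h : X → Evec m1} {g : X → Evec m2}
    (hh : ∃ A : X →ᵃ[ℝ] Evec m1, ∀ z, h z = A z)
    (hg1 : ∀ i, ConvexOn ℝ Set.univ (fun z => g z i))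
    (lamv : Evec m1) (muv : Evec m2) (hmuv : ∀ i, 0 ≤ muv i) :
    ConvexOn ℝ Set.univ (fun z => (∑ i, lamv i * h z i) + (∑ j, muv j * g z j)) := by
  obtain ⟨A, hA⟩ := hh
  refine ⟨convex_univ, fun p _ q _ a b ha hb hab => ?_⟩
  simp only [smul_eq_mul]
  have hcombo : h (a • p + b • q) = a • h p + b • h q := by
    rw [hA, hA, hA]; exact Convex.combo_affine_apply hab
  have hHcoord : ∀ i, h (a • p + b • q) i = a * h p i + b * h q i := by
    intro i; rw [hcombo]; simp
  have e1 : ∑ i, lamv i * h (a • p + b • q) i =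
      a * (∑ i, lamv i * h p i) + b * (∑ i, lamv i * h q i) := by
    rw [Finset.mul_sum, Finset.mul_sum, ← Finset.sum_add_distrib]
    exact Finset.sum_congr rfl fun i _ => by rw [hHcoord i]; ring
  have e2 : ∑ j, muv j * g (a • p + b • q) j ≤
      a * (∑ j, muv j * g p j) + b * (∑ j, muv j * g q j) := by
    have step : ∑ j, muv j * g (a • p + b • q) j ≤
        ∑ j, muv j * (a * g p j + b * g q j) := by
      refine Finset.sum_le_sum fun j _ => mul_le_mul_of_nonneg_left ?_ (hmuv j)
      have := (hg1 j).2 (Set.mem_univ p) (Set.mem_univ q) ha hb hab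
      simpa using this
    have e3 : ∑ j, muv j * (a * g p j + b * g q j) =
        a * (∑ j, muv j * g p j) + b * (∑ j, muv j * g q j) := by
      rw [Finset.mul_sum, Finset.mul_sum, ← Finset.sum_add_distrib]
      exact Finset.sum_congr rfl fun j _ => by ring
    linarith
  linarith [e1, e2]

/-- The key inclusion: the iterates satisfy
`(yᵏ, -h(xᵏ), vᵏ) ∈ ∂L(xᵏ, λᵏ, μᵏ)`. -/
lemma ES_incl {f : X → ℝ} {h : X → Evec m1} {g : X → Evec m2}
    (hf : ConvexOn ℝ Set.univ f)
    (hh : ∃ A : X →ᵃ[ℝ] Evec m1, ∀ z, h z = A z)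
    (hg1 : ∀ i, ConvexOn ℝ Set.univ (fun z => g z i))
    (hg2 : ∀ i, ContDiff ℝ 1 (fun z => g z i))
    {σ : ℝ} {c : ℕ → ℝ} {x y w : ℕ → X} {lam : ℕ → Evec m1} {mu : ℕ → Evec m2}
    (halg : ALMSeq f h g σ c x y w lam mu) (k : ℕ) (hk : 1 ≤ k) :
    saddleSubdiff f h g (x k) (lam k) (mu k) (y k) (-(h (x k)))
      (toE fun j => (mu (k-1) j - mu k j) / c k) := by
  have hc0 : 0 < c k := halg.c_pos k
  have hc0' : c k ≠ 0 := ne_of_gt hc0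
  have hmukc : ∀ j, mu k j = max 0 (mu (k-1) j + c k * g (x k) j) := by
    intro j; rw [halg.mu_update k hk]; rfl
  have hlamkc : ∀ i, lam k i = lam (k-1) i + c k * h (x k) i := by
    intro i; rw [halg.lam_update k hk]; simp
  have hmuknn : ∀ j, 0 ≤ mu k j := fun j => by rw [hmukc j]; exact le_max_left _ _
  constructor
  · -- primal part, via ES_transfer
    set xk := x k with hxk
    set c0 := c k with hc0def
    -- sum forms of the augmented Lagrangian remainder and the Lagrangian remainder
    set φ : X → ℝ := fun z => (∑ i, lam (k-1) i * h z i) + (c0 / 2) * (∑ i, (h z i) ^ 2) +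
      (1 / (2 * c0)) * ((∑ j, (max 0 (mu (k-1) j + c0 * g z j)) ^ 2) - ‖mu (k-1)‖ ^ 2)
      with hφdef
    set ψ : X → ℝ := fun z => (∑ i, lam k i * h z i) + (∑ j, mu k j * g z j) with hψdef
    have hφaug : ∀ z, f z + φ z = AugLag f h g c0 z (lam (k-1)) (mu (k-1)) := by
      intro z
      simp only [hφdef, AugLag, ES_inner, ES_normsq, ES_toE]
      ring
    have hψlag : ∀ z, f z + ψ z = Lag f h g z (lam k) (mu k) := by
      intro z
      simp only [hψdef, Lag, ES_inner]
      ring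
    have hψconv : ConvexOn ℝ Set.univ ψ := ES_psi_convex hh hg1 (lam k) (mu k) hmuknn
    have hy : ∀ x', f xk + φ xk + ⟪y k, x' - xk⟫ ≤ f x' + φ x' := by
      intro x'
      rw [hφaug xk, hφaug x']
      exact halg.subgrad k hk x'
    have hD : ∀ d : X, ∃ Dd : ℝ, HasDerivAt (fun t : ℝ => φ (xk + t • d)) Dd 0 ∧
        HasDerivAt (fun t : ℝ => ψ (xk + t • d)) Dd 0 := by
      intro d
      obtain ⟨A, hA⟩ := hh
      set Ad : Evec m1 := A.linear d with hAd
      have h0 : xk + (0:ℝ) • d = xk := by simp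
      have hline : ∀ t : ℝ, h (xk + t • d) = h xk + t • Ad := by
        intro t
        rw [hA, hA]
        have h1 : xk + t • d = t • d +ᵥ xk := by rw [vadd_eq_add, add_comm]
        rw [h1, AffineMap.map_vadd]
        simp [hAd, vadd_eq_add, add_comm]
      have hHcoord : ∀ (t : ℝ) i, h (xk + t • d) i = h xk i + t * Ad i := by
        intro t i; rw [hline t]; simp
      -- coordinate derivatives of h along the line
      have Hi : ∀ i, HasDerivAt (fun t : ℝ => h (xk + t • d) i) (Ad i) 0 := by
        intro i
        have h1 : HasDerivAt (fun t : ℝ => h xk i + t * Ad i) (Ad i) 0 :=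
          (hasDerivAt_mul_const (Ad i)).const_add (h xk i)
        exact h1.congr_of_eventuallyEq
          (Filter.Eventually.of_forall fun t => (hHcoord t i))
      -- coordinate derivatives of g along the line
      set B : Fin m2 → ℝ := fun j => (fderiv ℝ (fun z => g z j) xk) d with hB
      have hGj : ∀ j, HasDerivAt (fun t : ℝ => g (xk + t • d) j) (B j) 0 := by
        intro j
        have hdiff : DifferentiableAt ℝ (fun z => g z j) xk :=
          ((hg2 j).differentiable one_ne_zero).differentiableAt
        have hzline : HasDerivAt (fun t : ℝ => xk + t • d) d 0 := by
          have h1 : HasDerivAt (fun t : ℝ => t • d) ((1:ℝ) • d) 0 :=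
            (hasDerivAt_id 0).smul_const d
          simpa using h1.const_add xk
        exact hdiff.hasFDerivAt.comp_hasDerivAt_of_eq 0 hzline (by simp)
      -- derivative of φ along the line
      have T1 : HasDerivAt (fun t : ℝ => ∑ i, lam (k-1) i * h (xk + t • d) i)
          (∑ i, lam (k-1) i * Ad i) 0 :=
        HasDerivAt.fun_sum fun i _ => (Hi i).const_mul (lam (k-1) i)
      have T2 : HasDerivAt (fun t : ℝ => ∑ i, (h (xk + t • d) i) ^ 2)
          (∑ i, (2:ℕ) * (h (xk + (0:ℝ) • d) i) ^ (2-1) * Ad i) 0 :=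
        HasDerivAt.fun_sum fun i _ => (Hi i).pow 2
      have T3 : HasDerivAt
          (fun t : ℝ => ∑ j, (max 0 (mu (k-1) j + c0 * g (xk + t • d) j)) ^ 2)
          (∑ j, 2 * max 0 (mu (k-1) j + c0 * g xk j) * (c0 * B j)) 0 := by
        refine HasDerivAt.fun_sum fun j _ => ?_
        have hinner : HasDerivAt (fun t : ℝ => mu (k-1) j + c0 * g (xk + t • d) j)
            (c0 * B j) 0 := ((hGj j).const_mul c0).const_add (mu (k-1) j)
        have houter := ES_qderiv (mu (k-1) j + c0 * g xk j)
        have hpt : mu (k-1) j + c0 * g xk j =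
            (fun t : ℝ => mu (k-1) j + c0 * g (xk + t • d) j) 0 := by
          simp only [h0]
        rw [hpt] at houter
        have := houter.comp 0 hinner
        simpa [Function.comp_def, h0] using this
      have Tφ : HasDerivAt (fun t : ℝ => φ (xk + t • d))
          ((∑ i, lam (k-1) i * Ad i) +
            (c0 / 2) * (∑ i, (2:ℕ) * (h (xk + (0:ℝ) • d) i) ^ (2-1) * Ad i) +
            (1 / (2 * c0)) * (∑ j, 2 * max 0 (mu (k-1) j + c0 * g xk j) * (c0 * B j))) 0 := by
        exact (T1.add (T2.const_mul (c0/2))).add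
          ((T3.sub_const (‖mu (k-1)‖ ^ 2)).const_mul (1 / (2 * c0)))
      have Tψ : HasDerivAt (fun t : ℝ => ψ (xk + t • d))
          ((∑ i, lam k i * Ad i) + (∑ j, mu k j * B j)) 0 :=
        (HasDerivAt.fun_sum fun i _ => (Hi i).const_mul (lam k i)).add
          (HasDerivAt.fun_sum fun j _ => (hGj j).const_mul (mu k j))
      refine ⟨(∑ i, lam k i * Ad i) + (∑ j, mu k j * B j), ?_, Tψ⟩
      have heq : (∑ i, lam (k-1) i * Ad i) +
          (c0 / 2) * (∑ i, (2:ℕ) * (h (xk + (0:ℝ) • d) i) ^ (2-1) * Ad i) +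
          (1 / (2 * c0)) * (∑ j, 2 * max 0 (mu (k-1) j + c0 * g xk j) * (c0 * B j)) =
          (∑ i, lam k i * Ad i) + (∑ j, mu k j * B j) := by
        simp only [h0]
        have eA : (c0 / 2) * (∑ i, ((2:ℕ) : ℝ) * (h xk i) ^ (2-1) * Ad i) =
            ∑ i, c0 * (h xk i * Ad i) := by
          rw [Finset.mul_sum]
          exact Finset.sum_congr rfl fun i _ => by push_cast; ring
        have eB : (1 / (2 * c0)) * (∑ j, 2 * max 0 (mu (k-1) j + c0 * g xk j) * (c0 * B j)) =
            ∑ j, max 0 (mu (k-1) j + c0 * g xk j) * B j := by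
          rw [Finset.mul_sum]
          refine Finset.sum_congr rfl fun j _ => ?_
          field_simp
        have eC : ∑ i, lam k i * Ad i =
            (∑ i, lam (k-1) i * Ad i) + ∑ i, c0 * (h xk i * Ad i) := by
          rw [← Finset.sum_add_distrib]
          exact Finset.sum_congr rfl fun i _ => by rw [hlamkc i]; ring
        have eD : ∑ j, mu k j * B j = ∑ j, max 0 (mu (k-1) j + c0 * g xk j) * B j :=
          Finset.sum_congr rfl fun j _ => by rw [hmukc j]
        push_cast at eA ⊢
        rw [eB, eC, eD]
        linarith [eA]
      exact heq ▸ Tφ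
    intro x'
    have := ES_transfer hf hψconv hD hy x'
    rw [hψlag xk, hψlag x'] at this
    exact this
  · -- dual part
    intro lam' mu' hmu'
    simp only [Lag]
    have hhpart : ⟪lam', h (x k)⟫ - ⟪lam k, h (x k)⟫ + ⟪-(h (x k)), lam' - lam k⟫ = 0 := by
      rw [inner_neg_left, inner_sub_right]
      rw [real_inner_comm (h (x k)) lam', real_inner_comm (h (x k)) (lam k)]
      ring
    have hgpart : ⟪mu', g (x k)⟫ - ⟪mu k, g (x k)⟫ +
        ⟪toE fun j => (mu (k-1) j - mu k j) / c k, mu' - mu k⟫ ≤ 0 := by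
      rw [ES_inner, ES_inner, ES_inner]
      rw [← Finset.sum_sub_distrib, ← Finset.sum_add_distrib]
      refine Finset.sum_nonpos fun j _ => ?_
      have hs := hmukc j
      rcases le_total 0 (mu (k-1) j + c k * g (x k) j) with hsp | hsn
      · have : mu k j = mu (k-1) j + c k * g (x k) j := by rw [hs, max_eq_right hsp]
        simp only [ES_toE, PiLp.sub_apply]
        rw [this]
        have e : (mu (k-1) j - (mu (k-1) j + c k * g (x k) j)) / c k = -g (x k) j := by
          rw [div_eq_iff hc0']; ring
        rw [e]
        ring_nf
        nlinarith [le_refl (0:ℝ)]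
      · have hz : mu k j = 0 := by rw [hs, max_eq_left hsn]
        simp only [ES_toE, PiLp.sub_apply]
        rw [hz]
        have e : (mu (k-1) j - 0) / c k = mu (k-1) j / c k := by ring
        rw [e]
        have h1 : mu' j * g (x k) j + mu' j * (mu (k-1) j / c k) =
            mu' j * ((mu (k-1) j + c k * g (x k) j) / c k) := by
          field_simp
          ring
        have h2 : mu' j * ((mu (k-1) j + c k * g (x k) j) / c k) ≤ 0 :=
          mul_nonpos_of_nonneg_of_nonpos (hmu' j) (div_nonpos_of_nonpos_of_nonneg hsn hc0.le)
        nlinarith [h1, h2]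
    linarith [hhpart, hgpart]

lemma ES_expand {E : Type*} [NormedAddCommGroup E] [InnerProductSpace ℝ E]
    (p s q : E) (t : ℝ) :
    ‖(p - t • q) - s‖ ^ 2 = ‖p - s‖ ^ 2 - 2 * t * ⟪q, p - s⟫ + t ^ 2 * ‖q‖ ^ 2 := by
  have h1 : (p - t • q) - s = (p - s) - t • q := by abel
  rw [h1, norm_sub_sq_real, real_inner_smul_right, real_inner_comm (p - s) q]
  have h2 : ‖t • q‖ ^ 2 = t ^ 2 * ‖q‖ ^ 2 := by
    rw [norm_smul, mul_pow, Real.norm_eq_abs, sq_abs]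
  rw [h2]
  ring

set_option maxHeartbeats 1000000 in
/-- The Fejér-monotonicity inequality for the iterates. -/
lemma ES_fejer {f : X → ℝ} {h : X → Evec m1} {g : X → Evec m2}
    (hf : ConvexOn ℝ Set.univ f)
    (hh : ∃ A : X →ᵃ[ℝ] Evec m1, ∀ z, h z = A z)
    (hg1 : ∀ i, ConvexOn ℝ Set.univ (fun z => g z i))
    (hg2 : ∀ i, ContDiff ℝ 1 (fun z => g z i))
    {σ : ℝ} {c : ℕ → ℝ} {x y w : ℕ → X} {lam : ℕ → Evec m1} {mu : ℕ → Evec m2}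
    (halg : ALMSeq f h g σ c x y w lam mu)
    {xs : X} {lams : Evec m1} {mus : Evec m2} (hmus : ∀ i, 0 ≤ mus i)
    (hsad : saddleSubdiff f h g xs lams mus 0 0 0) (k : ℕ) (hk : 1 ≤ k) :
    ‖w k - xs‖ ^ 2 + ‖lam k - lams‖ ^ 2 + ‖mu k - mus‖ ^ 2 +
      (1 - σ) * (c k) ^ 2 * (‖h (x k)‖ ^ 2 +
        ‖toE (fun j => (mu (k-1) j - mu k j) / c k)‖ ^ 2) ≤
    ‖w (k-1) - xs‖ ^ 2 + ‖lam (k-1) - lams‖ ^ 2 + ‖mu (k-1) - mus‖ ^ 2 := by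
  have hc0 : 0 < c k := halg.c_pos k
  have hc0' : c k ≠ 0 := ne_of_gt hc0
  set c0 := c k with hc0def
  set uk : Evec m1 := -(h (x k)) with hukdef
  set vk : Evec m2 := toE (fun j => (mu (k-1) j - mu k j) / c0) with hvkdef
  have hmukc : ∀ j, mu k j = max 0 (mu (k-1) j + c0 * g (x k) j) := by
    intro j; rw [halg.mu_update k hk]; rfl
  have hmuknn : ∀ j, 0 ≤ mu k j := fun j => by rw [hmukc j]; exact le_max_left _ _
  -- update identities in subtraction form
  have hw : w k = w (k-1) - c0 • y k := halg.w_update k hk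
  have hlam : lam k = lam (k-1) - c0 • uk := by
    rw [halg.lam_update k hk, hukdef]
    rw [smul_neg, sub_neg_eq_add]
  have hmu : mu k = mu (k-1) - c0 • vk := by
    ext j
    simp only [hvkdef, PiLp.sub_apply, PiLp.smul_apply, ES_toE, smul_eq_mul]
    field_simp
    ring
  -- expansions
  have E1 : ‖w k - xs‖ ^ 2 = ‖w (k-1) - xs‖ ^ 2 - 2 * c0 * ⟪y k, w (k-1) - xs⟫ +
      c0 ^ 2 * ‖y k‖ ^ 2 := by rw [hw]; exact ES_expand _ _ _ _
  have E2 : ‖lam k - lams‖ ^ 2 = ‖lam (k-1) - lams‖ ^ 2 -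
      2 * c0 * ⟪uk, lam (k-1) - lams⟫ + c0 ^ 2 * ‖uk‖ ^ 2 := by
    rw [hlam]; exact ES_expand _ _ _ _
  have E3 : ‖mu k - mus‖ ^ 2 = ‖mu (k-1) - mus‖ ^ 2 -
      2 * c0 * ⟪vk, mu (k-1) - mus⟫ + c0 ^ 2 * ‖vk‖ ^ 2 := by
    rw [hmu]; exact ES_expand _ _ _ _
  -- decompositions of the inner products
  have d1 : ⟪y k, w (k-1) - xs⟫ = ⟪y k, w (k-1) - x k⟫ + ⟪y k, x k - xs⟫ := by
    rw [← inner_add_right, sub_add_sub_cancel]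
  have hlamsub : lam (k-1) - lam k = c0 • uk := by rw [hlam]; abel
  have hmusub : mu (k-1) - mu k = c0 • vk := by rw [hmu]; abel
  have d2 : ⟪uk, lam (k-1) - lams⟫ = c0 * ‖uk‖ ^ 2 + ⟪uk, lam k - lams⟫ := by
    have : lam (k-1) - lams = (lam (k-1) - lam k) + (lam k - lams) := by abel
    rw [this, inner_add_right, hlamsub, real_inner_smul_right,
      real_inner_self_eq_norm_sq]
  have d3 : ⟪vk, mu (k-1) - mus⟫ = c0 * ‖vk‖ ^ 2 + ⟪vk, mu k - mus⟫ := by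
    have : mu (k-1) - mus = (mu (k-1) - mu k) + (mu k - mus) := by abel
    rw [this, inner_add_right, hmusub, real_inner_smul_right,
      real_inner_self_eq_norm_sq]
  -- monotonicity
  have hM := ES_mono hmuknn hmus (ES_incl hf hh hg1 hg2 halg k hk) hsad
  rw [← hvkdef] at hM
  -- error criterion
  have herr := halg.err k hk
  have hminvk : (fun i => min (mu (k-1) i / c k) (-(g (x k) i))) =
      fun j => (mu (k-1) j - mu k j) / c0 := by
    funext i
    rw [ES_min_eq hc0, hmukc i]
  rw [hminvk] at herr
  rw [← hvkdef, ← hc0def] at herr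
  -- scaled error criterion
  have hsc : 2 * c0 * |⟪w (k-1) - x k, y k⟫| + c0 ^ 2 * ‖y k‖ ^ 2 ≤
      σ * (c0 ^ 2 * (‖h (x k)‖ ^ 2 + ‖vk‖ ^ 2)) := by
    have h1 := mul_le_mul_of_nonneg_left herr (mul_nonneg hc0.le hc0.le)
    have e1 : (c0 * c0) * (2 / c0 * |⟪w (k-1) - x k, y k⟫| + ‖y k‖ ^ 2) =
        2 * c0 * |⟪w (k-1) - x k, y k⟫| + c0 ^ 2 * ‖y k‖ ^ 2 := by
      field_simp
    have e2 : (c0 * c0) * (σ * (‖h (x k)‖ ^ 2 + ‖vk‖ ^ 2)) =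
        σ * (c0 ^ 2 * (‖h (x k)‖ ^ 2 + ‖vk‖ ^ 2)) := by ring
    rw [e1, e2] at h1
    exact h1
  have habs : -|⟪w (k-1) - x k, y k⟫| ≤ ⟪y k, w (k-1) - x k⟫ := by
    rw [real_inner_comm]
    exact neg_abs_le _
  have huknorm : ‖uk‖ ^ 2 = ‖h (x k)‖ ^ 2 := by rw [hukdef, norm_neg]
  have hprod1 : 0 ≤ c0 * (⟪y k, w (k-1) - x k⟫ + |⟪w (k-1) - x k, y k⟫|) :=
    mul_nonneg hc0.le (by linarith)
  have hprod2 : 0 ≤ c0 * (⟪y k, x k - xs⟫ + ⟪uk, lam k - lams⟫ + ⟪vk, mu k - mus⟫) :=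
    mul_nonneg hc0.le hM
  rw [E1, E2, E3, d1, d2, d3, huknorm]
  nlinarith [hsc, hprod1, hprod2]

lemma ES_triple_norm (a : X) (u : Evec m1) (v : Evec m2) :
    ‖asT (a, mkDual u v)‖ ^ 2 = ‖a‖ ^ 2 + (‖u‖ ^ 2 + ‖v‖ ^ 2) := by
  have h1 : ‖asT (a, mkDual u v)‖ ^ 2 = ‖a‖ ^ 2 + ‖mkDual u v‖ ^ 2 :=
    WithLp.prod_norm_sq_eq_of_L2 _
  have h2 : ‖mkDual u v‖ ^ 2 = ‖u‖ ^ 2 + ‖v‖ ^ 2 :=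
    WithLp.prod_norm_sq_eq_of_L2 _
  rw [h1, h2]

lemma ES_proj {f : X → ℝ} {h : X → Evec m1} {g : X → Evec m2}
    (hne : (SaddlePoints f h g).Nonempty) (z : X) (p : DualPair m1 m2) :
    Metric.infDist z (PrimalOpt f h g) ≤
      Metric.infDist (asT (z, p)) (asT '' SaddlePoints f h g) := by
  by_contra hlt
  push_neg at hlt
  have hTne : (asT '' SaddlePoints f h g).Nonempty := hne.image _
  obtain ⟨t, htmem, htdist⟩ := (Metric.infDist_lt_iff hTne).mp hlt
  obtain ⟨s, hsS, rfl⟩ := htmem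
  obtain ⟨xs, lams, mus, rfl, hmus, hssub⟩ := hsS
  have hxsP : xs ∈ PrimalOpt f h g := ES_saddle_primal hmus hssub
  have h1 : Metric.infDist z (PrimalOpt f h g) ≤ dist z xs :=
    Metric.infDist_le_dist_of_mem hxsP
  have h2 : dist z xs ≤ dist (asT (z, p)) (asT (xs, mkDual lams mus)) := by
    rw [WithLp.prod_dist_eq_of_L2 (asT (z, p)) (asT (xs, mkDual lams mus))]
    have h3 : dist z xs = Real.sqrt (dist z xs ^ 2) := (Real.sqrt_sq dist_nonneg).symm
    rw [h3]
    apply Real.sqrt_le_sqrt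
    show dist z xs ^ 2 ≤ dist z xs ^ 2 + dist p (mkDual lams mus) ^ 2
    exact le_add_of_nonneg_right (sq_nonneg _)
  linarith

end ESMain

theorem eckstein_silva_alm_primal_distance_tends_to_zero {f : X → ℝ} {h : X → Evec m1} {g : X → Evec m2}
    (hf : ConvexOn ℝ Set.univ f)
    (hh : ∃ A : X →ᵃ[ℝ] Evec m1, ∀ z, h z = A z)
    (hg1 : ∀ i, ConvexOn ℝ Set.univ (fun z => g z i))
    (hg2 : ∀ i, ContDiff ℝ 1 (fun z => g z i))
    {σ : ℝ} {c : ℕ → ℝ} {x y w : ℕ → X} {lam : ℕ → Evec m1} {mu : ℕ → Evec m2}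
    (halg : ALMSeq f h g σ c x y w lam mu)
    (hsad : (SaddlePoints f h g).Nonempty)
    {κ ε : ℝ} (hκ : 0 < κ) (hε : 0 < ε)
    (heb : ∀ (z : X) (lam' : Evec m1) (mu' : Evec m2) (y' : X) (u' : Evec m1) (v' : Evec m2),
      (∀ i, 0 ≤ mu' i) → saddleSubdiff f h g z lam' mu' y' u' v' →
      ‖asT (y', mkDual u' v')‖ ≤ ε →
      Metric.infDist (asT (z, mkDual lam' mu')) (asT '' SaddlePoints f h g) ≤
        κ * ‖asT (y', mkDual u' v')‖)
 :
    Tendsto (fun k => Metric.infDist (x k) (PrimalOpt f h g)) atTop (nhds 0) := by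
  classical
  obtain ⟨s0, hs0⟩ := hsad
  obtain ⟨xs, lams, mus, hseq, hmus, hssub⟩ := hs0
  have hsadne : (SaddlePoints f h g).Nonempty := ⟨s0, ⟨xs, lams, mus, hseq, hmus, hssub⟩⟩
  obtain ⟨cmin, hcmin_pos, hcmin⟩ := halg.c_inf
  have hσ1 : (0:ℝ) < 1 - σ := by linarith [halg.sigma_lt_one]
  -- the Fejér quantities
  set a : ℕ → ℝ := fun k => ‖w k - xs‖ ^ 2 + ‖lam k - lams‖ ^ 2 + ‖mu k - mus‖ ^ 2 with ha
  set U : ℕ → ℝ := fun k => ‖h (x k)‖ ^ 2 +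
    ‖toE (fun j => (mu (k-1) j - mu k j) / c k)‖ ^ 2 with hUdef
  have hUnn : ∀ k, 0 ≤ U k := fun k => by positivity
  have hstep : ∀ k, 1 ≤ k → a k + (1 - σ) * (c k) ^ 2 * U k ≤ a (k - 1) :=
    fun k hk => ES_fejer hf hh hg1 hg2 halg hmus hssub k hk
  have hstep' : ∀ k : ℕ, a (k+1) + (1 - σ) * (c (k+1)) ^ 2 * U (k+1) ≤ a k :=
    fun k => hstep (k+1) (Nat.succ_le_succ (Nat.zero_le k))
  have hanti : Antitone a := by
    apply antitone_nat_of_succ_le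
    intro k
    have h1 := hstep' k
    have h2 : 0 ≤ (1 - σ) * (c (k+1)) ^ 2 * U (k+1) :=
      mul_nonneg (mul_nonneg hσ1.le (sq_nonneg _)) (hUnn _)
    linarith
  have hbdd : BddBelow (Set.range a) := by
    refine ⟨0, fun r hr => ?_⟩
    obtain ⟨k, rfl⟩ := hr
    positivity
  have hconv : Tendsto a atTop (𝓝 (⨅ k, a k)) := tendsto_atTop_ciInf hanti hbdd
  have hconv2 : Tendsto (fun k => a (k+1)) atTop (𝓝 (⨅ k, a k)) := by
    have := hconv.comp (tendsto_add_atTop_nat 1)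
    simpa [Function.comp_def] using this
  have hdiff : Tendsto (fun k => a k - a (k+1)) atTop (𝓝 0) := by
    simpa using hconv.sub hconv2
  have hDU : Tendsto (fun k => (1 - σ) * (c (k+1)) ^ 2 * U (k+1)) atTop (𝓝 0) := by
    apply squeeze_zero (fun k => mul_nonneg (mul_nonneg hσ1.le (sq_nonneg _)) (hUnn _))
      (fun k => ?_) hdiff
    have := hstep' k
    linarith
  have hUz : Tendsto (fun k => U (k+1)) atTop (𝓝 0) := by
    set C : ℝ := ((1 - σ) * cmin ^ 2)⁻¹ with hC
    have hpos : (0:ℝ) < (1 - σ) * cmin ^ 2 := mul_pos hσ1 (pow_pos hcmin_pos 2)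
    have hC1 : C * ((1 - σ) * cmin ^ 2) = 1 := inv_mul_cancel₀ (ne_of_gt hpos)
    have hbound : ∀ k, U (k+1) ≤ C * ((1 - σ) * (c (k+1)) ^ 2 * U (k+1)) := by
      intro k
      have h5 : (1 - σ) * cmin ^ 2 * U (k+1) ≤ (1 - σ) * (c (k+1)) ^ 2 * U (k+1) :=
        mul_le_mul_of_nonneg_right
          (mul_le_mul_of_nonneg_left
            (pow_le_pow_left₀ hcmin_pos.le (hcmin (k+1)) 2) hσ1.le) (hUnn _)
      have h6 := mul_le_mul_of_nonneg_left h5 (inv_nonneg.mpr hpos.le)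
      rw [← hC] at h6
      rw [← mul_assoc, hC1, one_mul] at h6
      exact h6
    have hlim : Tendsto (fun k => C * ((1 - σ) * (c (k+1)) ^ 2 * U (k+1))) atTop (𝓝 0) := by
      simpa using hDU.const_mul C
    exact squeeze_zero (fun k => hUnn _) hbound hlim
  -- the residual
  set R : ℕ → ℝ := fun k => ‖asT (y k, mkDual (-(h (x k)))
    (toE fun j => (mu (k-1) j - mu k j) / c k))‖ with hRdef
  have hRsq : ∀ k, 1 ≤ k → R k ^ 2 ≤ (1 + σ) * U k := by
    intro k hk
    have hc0 : 0 < c k := halg.c_pos k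
    have hmukc : ∀ j, mu k j = max 0 (mu (k-1) j + c k * g (x k) j) := by
      intro j; rw [halg.mu_update k hk]; rfl
    have herr := halg.err k hk
    have hminvk : (fun i => min (mu (k-1) i / c k) (-(g (x k) i))) =
        fun j => (mu (k-1) j - mu k j) / c k := by
      funext i
      rw [ES_min_eq hc0, hmukc i]
    rw [hminvk] at herr
    have habs0 : 0 ≤ (2 / c k) * |⟪w (k-1) - x k, y k⟫| := by positivity
    have hY : ‖y k‖ ^ 2 ≤ σ * U k := by
      simp only [hUdef]
      linarith
    have hT := ES_triple_norm (y k) (-(h (x k))) (toE fun j => (mu (k-1) j - mu k j) / c k)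
    rw [norm_neg] at hT
    simp only [hRdef, hUdef] at hT ⊢
    simp only [hUdef] at hY
    linarith
  have hR0 : Tendsto (fun k => R (k+1)) atTop (𝓝 0) := by
    have h4 : Tendsto (fun k => Real.sqrt ((1 + σ) * U (k+1))) atTop (𝓝 0) := by
      have h5 : Tendsto (fun k => (1 + σ) * U (k+1)) atTop (𝓝 0) := by
        simpa using hUz.const_mul (1 + σ)
      have h6 := (Real.continuous_sqrt.tendsto 0).comp h5
      simpa [Function.comp_def] using h6
    apply squeeze_zero (fun k => norm_nonneg _) (fun k => ?_) h4
    have h7 := hRsq (k+1) (Nat.succ_le_succ (Nat.zero_le k))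
    calc R (k+1) = Real.sqrt (R (k+1) ^ 2) := (Real.sqrt_sq (norm_nonneg _)).symm
      _ ≤ Real.sqrt ((1 + σ) * U (k+1)) := Real.sqrt_le_sqrt h7
  -- conclusion via the error bound
  rw [← tendsto_add_atTop_iff_nat 1]
  have hlimR : Tendsto (fun k => κ * R (k+1)) atTop (𝓝 0) := by
    simpa using hR0.const_mul κ
  apply squeeze_zero' (Filter.Eventually.of_forall fun k => Metric.infDist_nonneg) ?_ hlimR
  have hev : ∀ᶠ k in atTop, R (k+1) < ε := hR0.eventually (gt_mem_nhds hε)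
  filter_upwards [hev] with k hkε
  have hk1 : 1 ≤ k + 1 := Nat.succ_le_succ (Nat.zero_le k)
  have hincl := ES_incl hf hh hg1 hg2 halg (k+1) hk1
  have hmuknn : ∀ i, 0 ≤ mu (k+1) i := by
    intro i
    rw [halg.mu_update (k+1) hk1]
    exact le_max_left _ _
  have hbd := heb (x (k+1)) (lam (k+1)) (mu (k+1)) (y (k+1)) (-(h (x (k+1))))
    (toE fun j => (mu k j - mu (k+1) j) / c (k+1)) hmuknn hincl (le_of_lt hkε)
  exact le_trans (ES_proj hsadne (x (k+1)) (mkDual (lam (k+1)) (mu (k+1)))) hbd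
end
end
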